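/- Let B be a Banach A-bimodule such that every derivation A** → B* is weak*-to-weak* continuous. If Z^ℓ_{B**}(A**) = A** and every continuous derivation from A into B* is inner, then every continuous derivation from A** into B* is inner. -/

import Mathlib

open ContinuousLinearMap NormedSpace

noncomputable section

section Defs

variable {X Y Z W : Type} [NormedAddCommGroup X] [NormedSpace ℝ X]
  [NormedAddCommGroup Y] [NormedSpace ℝ Y] [NormedAddCommGroup Z] [NormedSpace ℝ Z]
  [NormedAddCommGroup W] [NormedSpace ℝ W]

instance strongDualBidualNormedAddCommGroup {V : Type} [NormedAddCommGroup V] [NormedSpace ℝ V] :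
    NormedAddCommGroup (StrongDual ℝ (StrongDual ℝ V)) :=
  ContinuousLinearMap.toNormedAddCommGroup

instance strongDualBidualNormedSpace {V : Type} [NormedAddCommGroup V] [NormedSpace ℝ V] :
    NormedSpace ℝ (StrongDual ℝ (StrongDual ℝ V)) :=
  ContinuousLinearMap.toNormedSpace

/-- The first adjoint `m^*` of a bounded bilinear map `m : X × Y → Z`,
as a map `Z^* × X → Y^*`, `⟨m^*(z',x), y⟩ = ⟨z', m(x,y)⟩`. -/
def adj1 (m : X →L[ℝ] Y →L[ℝ] Z) :
    StrongDual ℝ Z →L[ℝ] X →L[ℝ] StrongDual ℝ Y :=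
  (((ContinuousLinearMap.compL ℝ X (Y →L[ℝ] Z) (StrongDual ℝ Y)).flip m).comp
    (ContinuousLinearMap.compL ℝ Y Z ℝ))

@[simp] lemma adj1_apply (m : X →L[ℝ] Y →L[ℝ] Z) (z' : StrongDual ℝ Z) (x : X) (y : Y) :
    adj1 m z' x y = z' (m x y) := rfl

/-- The first (left) Arens extension `m^{***} : X^{**} × Y^{**} → Z^{**}` of a
bounded bilinear map `m : X × Y → Z`. -/
def arens (m : X →L[ℝ] Y →L[ℝ] Z) :
    StrongDual ℝ (StrongDual ℝ X) →L[ℝ] StrongDual ℝ (StrongDual ℝ Y) →L[ℝ] StrongDual ℝ (StrongDual ℝ Z) :=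
  adj1 (adj1 (adj1 m))

/-- The adjoint (dual map) of a bounded linear map. -/
def dualMap' (D : X →L[ℝ] Y) : StrongDual ℝ Y →L[ℝ] StrongDual ℝ X :=
  (ContinuousLinearMap.compL ℝ X Y ℝ).flip D

@[simp] lemma dualMap'_apply (D : X →L[ℝ] Y) (g : StrongDual ℝ Y) (x : X) :
    dualMap' D g x = g (D x) := rfl

/-- The second adjoint `D'' : X^{**} → Y^{**}` of a bounded linear map. -/
def bidualMap (D : X →L[ℝ] Y) : StrongDual ℝ (StrongDual ℝ X) →L[ℝ] StrongDual ℝ (StrongDual ℝ Y) :=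
  dualMap' (dualMap' D)

/-- Given an action `t : A × X → X`, the transposed action on the dual `X^*`:
`(dualAct t) a f = f ∘ (t a)`. -/
def dualAct (t : W →L[ℝ] X →L[ℝ] X) : W →L[ℝ] StrongDual ℝ X →L[ℝ] StrongDual ℝ X :=
  ((ContinuousLinearMap.compL ℝ X X ℝ).flip).comp t

@[simp] lemma dualAct_apply (t : W →L[ℝ] X →L[ℝ] X) (a : W) (f : StrongDual ℝ X) (x : X) :
    dualAct t a f x = f (t a x) := rfl

/-- `D : A → X` is a derivation with respect to the multiplication `mul'` on `A`
and the left action `l` and right action `r` (`r a x` means `x · a`) of `A` on `X`. -/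
def IsDer {A' : Type} [NormedAddCommGroup A'] [NormedSpace ℝ A']
    (mul' : A' →L[ℝ] A' →L[ℝ] A') (l r : A' →L[ℝ] X →L[ℝ] X) (D : A' →L[ℝ] X) : Prop :=
  ∀ a b : A', D (mul' a b) = l a (D b) + r b (D a)

/-- `D : A → X` is an inner derivation: `D a = a·x - x·a` for some `x`. -/
def IsInner {A' : Type} [NormedAddCommGroup A'] [NormedSpace ℝ A']
    (l r : A' →L[ℝ] X →L[ℝ] X) (D : A' →L[ℝ] X) : Prop :=
  ∃ x : X, ∀ a : A', D a = l a x - r a x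

/-- The bimodule axioms for actions `l`, `r` of an algebra with multiplication `mul'`. -/
def IsBimod {A' : Type} [NormedAddCommGroup A'] [NormedSpace ℝ A']
    (mul' : A' →L[ℝ] A' →L[ℝ] A') (l r : A' →L[ℝ] X →L[ℝ] X) : Prop :=
  (∀ a b x, l (mul' a b) x = l a (l b x)) ∧
  (∀ a b x, r (mul' a b) x = r b (r a x)) ∧
  (∀ a b x, l a (r b x) = r b (l a x))

/-- weak*-to-weak* continuity of a map between dual spaces. -/
def WStarCont (f : StrongDual ℝ X → StrongDual ℝ Y) : Prop :=
  ∀ y : Y, Continuous fun φ : WeakDual ℝ X => f φ y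

end Defs

/-- A packaged Banach `A`-bimodule (used to form iterated duals). -/
structure ModPk (A : Type) [NormedAddCommGroup A] [NormedSpace ℝ A] : Type 1 where
  X : Type
  [grp : NormedAddCommGroup X]
  [mod : NormedSpace ℝ X]
  l : A →L[ℝ] X →L[ℝ] X
  r : A →L[ℝ] X →L[ℝ] X

attribute [instance] ModPk.grp ModPk.mod

variable {A : Type} [NormedAddCommGroup A] [NormedSpace ℝ A]

/-- The canonical dual of a packaged bimodule. -/
def ModPk.dual (P : ModPk A) : ModPk A :=
  ⟨StrongDual ℝ P.X, dualAct P.r, dualAct P.l⟩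

/-- The `n`-th iterated dual of a packaged bimodule. -/
def ModPk.iter (P : ModPk A) : ℕ → ModPk A
  | 0 => P
  | n+1 => (P.iter n).dual

/-- A "level": an algebra (given by its bilinear multiplication) together with a bimodule. -/
structure Lvl : Type 1 where
  Alg : Type
  [g1 : NormedAddCommGroup Alg]
  [m1 : NormedSpace ℝ Alg]
  Mod : Type
  [g2 : NormedAddCommGroup Mod]
  [m2 : NormedSpace ℝ Mod]
  mul : Alg →L[ℝ] Alg →L[ℝ] Alg
  l : Alg →L[ℝ] Mod →L[ℝ] Mod
  r : Alg →L[ℝ] Mod →L[ℝ] Mod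

attribute [instance] Lvl.g1 Lvl.m1 Lvl.g2 Lvl.m2

/-- Passing to second duals: `A^{**}` with the first Arens product, acting on `B^{**}`
via the Arens extensions `π_ℓ^{***}` and `π_r^{***}` of the module actions. -/
def Lvl.double (Q : Lvl) : Lvl where
  Alg := StrongDual ℝ (StrongDual ℝ Q.Alg)
  Mod := StrongDual ℝ (StrongDual ℝ Q.Mod)
  mul := arens Q.mul
  l := arens Q.l
  r := (arens Q.r.flip).flip

/-- Iterated even duals: `Lvl.iter Q n` is the level `(A^{(2n)}, B^{(2n)})`. -/
def Lvl.iter (Q : Lvl) : ℕ → Lvl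
  | 0 => Q
  | n+1 => (Q.iter n).double

/-- The canonical embedding `A → A^{(2n)}`. -/
def Lvl.embA (Q : Lvl) : (n : ℕ) → Q.Alg →L[ℝ] (Q.iter n).Alg
  | 0 => ContinuousLinearMap.id ℝ _
  | n+1 => (inclusionInDoubleDual ℝ ((Q.iter n).Alg)).comp (Q.embA n)

/-- The canonical embedding `B → B^{(2n)}`. -/
def Lvl.embM (Q : Lvl) : (n : ℕ) → Q.Mod →L[ℝ] (Q.iter n).Mod
  | 0 => ContinuousLinearMap.id ℝ _
  | n+1 => (inclusionInDoubleDual ℝ ((Q.iter n).Mod)).comp (Q.embM n)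

/-- The left-topological-center condition `Z^ℓ_{A^{(2n+2)}}(B^{(2n+2)}) = B^{(2n+2)}`,
stated at the double of a level `Q`: for each `b` in the second-dual module, the map
`a ↦ b·a` is weak*-to-weak* continuous. -/
def Lvl.doubleZl (Q : Lvl) : Prop :=
  ∀ b : (Q.double).Mod, WStarCont (X := StrongDual ℝ Q.Alg) (Y := StrongDual ℝ Q.Mod)
    (fun a => (Q.double).r a b)

/-- The base level of a Banach algebra `A` with a Banach `A`-bimodule `B`. -/
def lvlOf (A : Type) [NormedRing A] [NormedAlgebra ℝ A]
    (B : Type) [NormedAddCommGroup B] [NormedSpace ℝ B]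
    (l r : A →L[ℝ] B →L[ℝ] B) : Lvl :=
  Lvl.mk A B (ContinuousLinearMap.mul ℝ A) l r
section AuxGoldstine


section Aux

variable {E : Type} [NormedAddCommGroup E] [NormedSpace ℝ E]

lemma interp (F : StrongDual ℝ (StrongDual ℝ E)) (s : Finset (StrongDual ℝ E)) :
    ∃ x : E, ∀ φ ∈ s, φ x = F φ := by
  classical
  set T : E →ₗ[ℝ] (↥s → ℝ) :=
    { toFun := fun x φ => (φ : StrongDual ℝ E) x
      map_add' := by intro x y; ext φ; simp
      map_smul' := by intro c x; ext φ; simp }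
  by_cases hv : (fun φ : s => F φ) ∈ LinearMap.range T
  · obtain ⟨x, hx⟩ := hv
    exact ⟨x, fun φ hφ => congrFun hx ⟨φ, hφ⟩⟩
  · exfalso
    obtain ⟨f, hf0, hker⟩ := Submodule.exists_dual_map_eq_bot_of_notMem hv inferInstance
    set c : s → ℝ := fun φ => f fun j => if φ = j then 1 else 0 with hc
    set ψ : StrongDual ℝ E := ∑ φ : s, c φ • (φ : StrongDual ℝ E) with hψ
    have hker' : ∀ x : E, f (T x) = 0 := by
      intro x
      have h := hker ▸ (Submodule.mem_map_of_mem (f := f) (⟨x, rfl⟩ : T x ∈ LinearMap.range T))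
      simpa using h
    have hψ0 : ψ = 0 := by
      ext x
      have := LinearMap.pi_apply_eq_sum_univ f (T x)
      rw [hker'] at this
      simp only [hψ, ContinuousLinearMap.coe_sum', Finset.sum_apply,
        ContinuousLinearMap.coe_smul', Pi.smul_apply, smul_eq_mul,
        ContinuousLinearMap.zero_apply]
      rw [eq_comm]
      calc (0:ℝ) = ∑ φ : s, (T x) φ • c φ := this
        _ = ∑ φ : s, c φ * (φ : StrongDual ℝ E) x := by
            refine Finset.sum_congr rfl fun φ _ => ?_
            simp [T, c, mul_comm]
    have hFψ : F ψ = f fun φ : s => F φ := by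
      rw [LinearMap.pi_apply_eq_sum_univ f (fun φ : s => F φ)]
      simp only [hψ, map_sum, map_smul, smul_eq_mul]
      exact Finset.sum_congr rfl fun φ _ => mul_comm _ _
    rw [hψ0, map_zero] at hFψ
    exact hf0 hFψ.symm

end Aux

section Aux2

variable {E : Type} [NormedAddCommGroup E] [NormedSpace ℝ E]

lemma goldstine_dense :
    @Dense (WeakDual ℝ (StrongDual ℝ E)) (instTopologicalSpaceWeakDual ..)
      (Set.range fun x : E => inclusionInDoubleDual ℝ E x) := by
  intro F
  have hB : Function.Injective (topDualPairing ℝ (StrongDual ℝ E)) :=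
    ContinuousLinearMap.coe_injective
  have hemb := (WeakBilin.isEmbedding hB).toIsInducing
  set e : WeakDual ℝ (StrongDual ℝ E) → (StrongDual ℝ E → ℝ) :=
    fun x y => topDualPairing ℝ (StrongDual ℝ E) x y with he
  rw [mem_closure_iff]
  intro o ho hFo
  obtain ⟨t, ht, rfl⟩ := hemb.isOpen_iff.1 ho
  obtain ⟨I, u, h1, h2⟩ := isOpen_pi_iff.1 ht (e F) hFo
  obtain ⟨x, hx⟩ := interp F I
  refine ⟨inclusionInDoubleDual ℝ E x, h2 fun φ hφ => ?_, ⟨x, rfl⟩⟩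
  have hx' : e (inclusionInDoubleDual ℝ E x) φ = e F φ := hx φ hφ
  show e (inclusionInDoubleDual ℝ E x) φ ∈ u φ
  rw [hx']
  exact (h1 φ hφ).2

lemma wstar_ext {f g : StrongDual ℝ (StrongDual ℝ E) → ℝ}
    (hf : Continuous fun φ : WeakDual ℝ (StrongDual ℝ E) => f φ)
    (hg : Continuous fun φ : WeakDual ℝ (StrongDual ℝ E) => g φ)
    (h : ∀ x : E, f (inclusionInDoubleDual ℝ E x) = g (inclusionInDoubleDual ℝ E x))
    (F : StrongDual ℝ (StrongDual ℝ E)) : f F = g F := by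
  have hd := goldstine_dense (E := E)
  have heq : (fun φ : WeakDual ℝ (StrongDual ℝ E) => f φ) = fun φ => g φ := by
    refine Continuous.ext_on hd hf hg ?_
    rintro φ ⟨x, rfl⟩
    exact h x
  exact congrFun heq F

end Aux2

end AuxGoldstine


set_option maxHeartbeats 2000000 in
/-- **Theorem 2-17.** Let `B` be a Banach `A`-bimodule such that every derivation
`A** → B*` is weak*-to-weak* continuous. If `Z^ℓ_{B**}(A**) = A**` and every continuous
derivation `A → B*` is inner, then every continuous derivation `A** → B*` is inner
(with inner element in `B*`; the derivation identity and the inner identity are read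
inside `B***` via the canonical embedding `B* → B***`). -/
theorem stmt12 (A : Type) [NormedRing A] [NormedAlgebra ℝ A] [CompleteSpace A]
    (B : Type) [NormedAddCommGroup B] [NormedSpace ℝ B] [CompleteSpace B]
    (l r : A →L[ℝ] B →L[ℝ] B)
    (hbim : IsBimod (ContinuousLinearMap.mul ℝ A) l r)
    -- every derivation `A** → B*` is weak*-to-weak* continuous
    (hwcont : ∀ D : StrongDual ℝ (StrongDual ℝ A) →L[ℝ] StrongDual ℝ B,
      (∀ F G : StrongDual ℝ (StrongDual ℝ A),
        inclusionInDoubleDual ℝ (StrongDual ℝ B) (D (arens (ContinuousLinearMap.mul ℝ A) F G)) =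
          dualAct (W := StrongDual ℝ (StrongDual ℝ A)) (X := StrongDual ℝ (StrongDual ℝ B)) ((arens r.flip).flip) F
            (inclusionInDoubleDual ℝ (StrongDual ℝ B) (D G)) +
          dualAct (W := StrongDual ℝ (StrongDual ℝ A)) (X := StrongDual ℝ (StrongDual ℝ B)) (arens l) G
            (inclusionInDoubleDual ℝ (StrongDual ℝ B) (D F))) →
      ∀ b : B, Continuous fun F : WeakDual ℝ (StrongDual ℝ A) => D F b)
    -- `Z^ℓ_{B**}(A**) = A**`
    (hZ : ∀ F : StrongDual ℝ (StrongDual ℝ A),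
      WStarCont (X := StrongDual ℝ B) (Y := StrongDual ℝ B) (fun G => arens l F G))
    -- `H¹(A, B*) = 0`
    (h1 : ∀ D : A →L[ℝ] StrongDual ℝ B,
      IsDer (ContinuousLinearMap.mul ℝ A) (dualAct r) (dualAct l) D →
      IsInner (dualAct r) (dualAct l) D) :
    -- `H¹(A**, B*) = 0`
    ∀ D : StrongDual ℝ (StrongDual ℝ A) →L[ℝ] StrongDual ℝ B,
      (∀ F G : StrongDual ℝ (StrongDual ℝ A),
        inclusionInDoubleDual ℝ (StrongDual ℝ B) (D (arens (ContinuousLinearMap.mul ℝ A) F G)) =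
          dualAct (W := StrongDual ℝ (StrongDual ℝ A)) (X := StrongDual ℝ (StrongDual ℝ B)) ((arens r.flip).flip) F
            (inclusionInDoubleDual ℝ (StrongDual ℝ B) (D G)) +
          dualAct (W := StrongDual ℝ (StrongDual ℝ A)) (X := StrongDual ℝ (StrongDual ℝ B)) (arens l) G
            (inclusionInDoubleDual ℝ (StrongDual ℝ B) (D F))) →
      ∃ b' : StrongDual ℝ B, ∀ F : StrongDual ℝ (StrongDual ℝ A),
        inclusionInDoubleDual ℝ (StrongDual ℝ B) (D F) =
          dualAct (W := StrongDual ℝ (StrongDual ℝ A)) (X := StrongDual ℝ (StrongDual ℝ B)) ((arens r.flip).flip) F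
            (inclusionInDoubleDual ℝ (StrongDual ℝ B) b') -
          dualAct (W := StrongDual ℝ (StrongDual ℝ A)) (X := StrongDual ℝ (StrongDual ℝ B)) (arens l) F
            (inclusionInDoubleDual ℝ (StrongDual ℝ B) b') := by
  intro D hD
  classical
  have harens : ∀ a b : A,
      arens (ContinuousLinearMap.mul ℝ A) (inclusionInDoubleDual ℝ A a)
        (inclusionInDoubleDual ℝ A b) = inclusionInDoubleDual ℝ A (a * b) := by
    intro a b; ext z'; rfl
  have hder0 : IsDer (ContinuousLinearMap.mul ℝ A) (dualAct r) (dualAct l)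
      (D.comp (inclusionInDoubleDual ℝ A)) := by
    intro a b
    ext x
    have key := ContinuousLinearMap.ext_iff.1
      (hD (inclusionInDoubleDual ℝ A a) (inclusionInDoubleDual ℝ A b))
      (inclusionInDoubleDual ℝ B x)
    rw [harens a b] at key
    exact key
  obtain ⟨b', hb'⟩ := h1 (D.comp (inclusionInDoubleDual ℝ A)) hder0
  have hDeq : ∀ (F : StrongDual ℝ (StrongDual ℝ A)) (x : B),
      D F x = F (adj1 r.flip b' x) - F (adj1 l.flip b' x) := by
    intro F x
    refine wstar_ext (E := A) (f := fun F => D F x)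
      (g := fun F => F (adj1 r.flip b' x) - F (adj1 l.flip b' x)) ?_ ?_ ?_ F
    · exact hwcont D hD x
    · exact (WeakDual.eval_continuous _).sub (WeakDual.eval_continuous _)
    · intro a
      exact ContinuousLinearMap.ext_iff.1 (hb' a) x
  have hDF : ∀ F : StrongDual ℝ (StrongDual ℝ A),
      D F = adj1 (adj1 r.flip) F b' - adj1 (adj1 l.flip) F b' := by
    intro F; ext x; exact hDeq F x
  refine ⟨b', fun F => ?_⟩
  ext Ψ
  have h2 : arens l F Ψ b' = Ψ (adj1 (adj1 l.flip) F b') := by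
    refine wstar_ext (E := B) (f := fun G => arens l F G b')
      (g := fun G => G (adj1 (adj1 l.flip) F b')) ?_ ?_ ?_ Ψ
    · exact hZ F b'
    · exact WeakDual.eval_continuous _
    · intro x
      have harg : adj1 (adj1 l) (inclusionInDoubleDual ℝ B x) b' = adj1 l.flip b' x := by
        ext a; rfl
      show F (adj1 (adj1 l) (inclusionInDoubleDual ℝ B x) b') = _
      rw [harg]
      rfl
  show Ψ (D F) = Ψ (adj1 (adj1 r.flip) F b') - arens l F Ψ b'
  rw [hDF F, map_sub, h2]
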